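/- Let p be an odd prime, q = p^f, G = PSL(2,q), and let g_0 be a p-regular element of G of order m, with q ≡ ε mod 2m where ε = ±1. For an even positive integer n = r_0 + r_1 p + ... + r_k p^k with 0 ≤ r_j ≤ p−1, the subspace W of homogeneous polynomials of degree n in two variables over a field K of characteristic p spanned by the monomials X^i Y^{n−i} with i = i_0 + i_1 p + ... + i_k p^k and 0 ≤ i_j ≤ r_j for all j, is invariant under the natural action of SL(2,q) on K[X,Y]. -/

import Mathlib

open scoped Classical
noncomputable section

open MvPolynomial

/-- The action of a matrix `[[a,b],[c,d]]` over `SL(2, F)` (with entries mapped into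
`K` via `φ`) on `K[X,Y]`, given by `X ↦ aX + bY`, `Y ↦ cX + dY`. -/
def sl2Act {F K : Type} [Field F] [Field K] (φ : F →+* K)
    (M : Matrix.SpecialLinearGroup (Fin 2) F) :
    MvPolynomial (Fin 2) K →ₐ[K] MvPolynomial (Fin 2) K :=
  MvPolynomial.bind₁
    ![C (φ ((M : Matrix (Fin 2) (Fin 2) F) 0 0)) * X 0 +
        C (φ ((M : Matrix (Fin 2) (Fin 2) F) 0 1)) * X 1,
      C (φ ((M : Matrix (Fin 2) (Fin 2) F) 1 0)) * X 0 +
        C (φ ((M : Matrix (Fin 2) (Fin 2) F) 1 1)) * X 1]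

set_option maxHeartbeats 1000000

-- general: product of members is member of product of submodules
theorem prod_mem_submodule_prod {R A ι : Type*} [CommSemiring R] [CommSemiring A]
    [Algebra R A] (s : Finset ι) (M : ι → Submodule R A) (x : ι → A)
    (h : ∀ j ∈ s, x j ∈ M j) : (∏ j ∈ s, x j) ∈ ∏ j ∈ s, M j := by
  classical
  induction s using Finset.induction with
  | empty =>
      rw [Finset.prod_empty, Finset.prod_empty]
      exact Submodule.one_le.mp le_rfl
  | insert _ _ hj ih =>
      rw [Finset.prod_insert hj, Finset.prod_insert hj]
      exact Submodule.mul_mem_mul (h _ (Finset.mem_insert_self _ _))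
        (ih fun j hjs => h j (Finset.mem_insert_of_mem hjs))

theorem binom_mem {K : Type} [Field K] (α β : K) (u v : MvPolynomial (Fin 2) K) (m : ℕ) :
    (C α * u + C β * v) ^ m ∈
      Submodule.span K {w : MvPolynomial (Fin 2) K | ∃ t ≤ m, w = u ^ t * v ^ (m - t)} := by
  rw [add_pow]
  apply Submodule.sum_mem
  intro i hi
  have him : i ≤ m := Nat.lt_succ_iff.mp (Finset.mem_range.mp hi)
  have : (C α * u) ^ i * (C β * v) ^ (m - i) * (m.choose i : MvPolynomial (Fin 2) K)
      = (α ^ i * β ^ (m - i) * (m.choose i : K)) • (u ^ i * v ^ (m - i)) := by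
    rw [smul_eq_C_mul]
    simp only [mul_pow, ← C_pow, ← map_natCast (C : K →+* MvPolynomial (Fin 2) K), ← C_mul]
    rw [C_mul, C_mul]; ring
  rw [this]
  exact Submodule.smul_mem _ _ (Submodule.subset_span ⟨i, him, rfl⟩)

theorem two_binom_mem {K : Type} [Field K] (α β γ δ : K) (u v : MvPolynomial (Fin 2) K)
    (m₁ m₂ : ℕ) :
    (C α * u + C β * v) ^ m₁ * (C γ * u + C δ * v) ^ m₂ ∈
      Submodule.span K
        {w : MvPolynomial (Fin 2) K | ∃ t ≤ m₁ + m₂, w = u ^ t * v ^ (m₁ + m₂ - t)} := by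
  have h := Submodule.mul_mem_mul (binom_mem α β u v m₁) (binom_mem γ δ u v m₂)
  rw [Submodule.span_mul_span] at h
  refine Submodule.span_mono ?_ h
  rintro w ⟨w₁, ⟨t₁, ht₁, rfl⟩, w₂, ⟨t₂, ht₂, rfl⟩, rfl⟩
  refine ⟨t₁ + t₂, by omega, ?_⟩
  have : m₁ - t₁ + (m₂ - t₂) = m₁ + m₂ - (t₁ + t₂) := by omega
  rw [← this]; ring

/-- Let `p` be an odd prime, `q = p^f`, `K` a field of characteristic `p`, and
`n = r_0 + r_1 p + ⋯ + r_k p^k` an even positive integer with `0 ≤ r_j ≤ p - 1`.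
The subspace `W` of homogeneous polynomials of degree `n` spanned by the monomials
`X^i Y^{n-i}` with `i = i_0 + i_1 p + ⋯ + i_k p^k`, `0 ≤ i_j ≤ r_j`, is invariant
under the natural action of `SL(2, q)` on `K[X,Y]`. -/
theorem sl2_invariant_subspace
    (p : ℕ) (hp : p.Prime) (hodd : Odd p)
    (K : Type) [Field K] [CharP K p]
    (F : Type) [Field F] [Fintype F] (f : ℕ) (hf : 0 < f)
    (hcard : Fintype.card F = p ^ f) (φ : F →+* K)
    (k : ℕ) (r : Fin (k + 1) → ℕ) (hr : ∀ j, r j ≤ p - 1)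
    (n : ℕ) (hn : n = ∑ j : Fin (k + 1), r j * p ^ (j : ℕ))
    (hne : Even n) (hnpos : 0 < n)
    (W : Submodule K (MvPolynomial (Fin 2) K))
    (hW : W = Submodule.span K
      { P : MvPolynomial (Fin 2) K | ∃ s : Fin (k + 1) → ℕ, (∀ j, s j ≤ r j) ∧
          P = X 0 ^ (∑ j : Fin (k + 1), s j * p ^ (j : ℕ)) *
              X 1 ^ (n - ∑ j : Fin (k + 1), s j * p ^ (j : ℕ)) }) :
    ∀ (M : Matrix.SpecialLinearGroup (Fin 2) F), ∀ P ∈ W, sl2Act φ M P ∈ W := by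
  intro M
  haveI : Fact p.Prime := ⟨hp⟩
  set a : K := φ ((M : Matrix (Fin 2) (Fin 2) F) 0 0) with ha
  set b : K := φ ((M : Matrix (Fin 2) (Fin 2) F) 0 1) with hb
  set c : K := φ ((M : Matrix (Fin 2) (Fin 2) F) 1 0) with hc
  set d : K := φ ((M : Matrix (Fin 2) (Fin 2) F) 1 1) with hd
  set A : MvPolynomial (Fin 2) K := C a * X 0 + C b * X 1 with hA
  set B : MvPolynomial (Fin 2) K := C c * X 0 + C d * X 1 with hB
  -- single-digit generating sets
  set S : Fin (k + 1) → Set (MvPolynomial (Fin 2) K) := fun j =>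
    {w | ∃ t ≤ r j, w = (X 0 ^ p ^ (j : ℕ)) ^ t * (X 1 ^ p ^ (j : ℕ)) ^ (r j - t)} with hS
  -- digit-wise subtraction
  have digit : ∀ s : Fin (k + 1) → ℕ, (∀ j, s j ≤ r j) →
      n - (∑ j : Fin (k + 1), s j * p ^ (j : ℕ))
        = ∑ j : Fin (k + 1), (r j - s j) * p ^ (j : ℕ) := by
    intro s hs
    have hsum : n = (∑ j : Fin (k + 1), s j * p ^ (j : ℕ))
        + ∑ j : Fin (k + 1), (r j - s j) * p ^ (j : ℕ) := by
      rw [hn, ← Finset.sum_add_distrib]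
      refine Finset.sum_congr rfl fun j _ => ?_
      rw [← add_mul, Nat.add_sub_cancel' (hs j)]
    omega
  -- the product of the single-digit spans is contained in W
  have hWle : (∏ j : Fin (k + 1), Submodule.span K (S j)) ≤ W := by
    rw [Submodule.prod_span, hW]
    refine Submodule.span_le.2 fun w hw => ?_
    obtain ⟨g, hg, rfl⟩ := (Set.mem_finset_prod Finset.univ S w).mp hw
    choose t ht hgt using fun j => hg (Finset.mem_univ j)
    refine Submodule.subset_span ⟨t, ht, ?_⟩
    calc ∏ j : Fin (k + 1), g j
        = (∏ j : Fin (k + 1), (X 0 : MvPolynomial (Fin 2) K) ^ (t j * p ^ (j : ℕ))) *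
          ∏ j : Fin (k + 1), (X 1 : MvPolynomial (Fin 2) K) ^ ((r j - t j) * p ^ (j : ℕ)) := by
          rw [← Finset.prod_mul_distrib]
          exact Finset.prod_congr rfl fun j _ => by
            rw [hgt j, ← pow_mul, ← pow_mul, mul_comm (t j), mul_comm (r j - t j)]
      _ = X 0 ^ (∑ j : Fin (k + 1), t j * p ^ (j : ℕ)) *
          X 1 ^ (n - ∑ j : Fin (k + 1), t j * p ^ (j : ℕ)) := by
          rw [Finset.prod_pow_eq_pow_sum, Finset.prod_pow_eq_pow_sum, digit t ht]
  -- Frobenius expansion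
  have expch : ∀ (α β : K) (m : ℕ),
      (C α * X 0 + C β * X 1 : MvPolynomial (Fin 2) K) ^ p ^ m
        = C (α ^ p ^ m) * (X 0 : MvPolynomial (Fin 2) K) ^ p ^ m
          + C (β ^ p ^ m) * (X 1 : MvPolynomial (Fin 2) K) ^ p ^ m := by
    intro α β m
    rw [add_pow_char_pow, mul_pow, mul_pow, ← C_pow, ← C_pow]
  -- key: images of generators lie in the product of spans
  have key : ∀ s : Fin (k + 1) → ℕ, (∀ j, s j ≤ r j) →
      sl2Act φ M (X 0 ^ (∑ j : Fin (k + 1), s j * p ^ (j : ℕ)) *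
        X 1 ^ (n - ∑ j : Fin (k + 1), s j * p ^ (j : ℕ)))
        ∈ ∏ j : Fin (k + 1), Submodule.span K (S j) := by
    intro s hs
    have hX0 : sl2Act φ M (X 0) = A := by
      simp [sl2Act, bind₁_X_right, hA, ha, hb]
    have hX1 : sl2Act φ M (X 1) = B := by
      simp [sl2Act, bind₁_X_right, hB, hc, hd]
    rw [map_mul, map_pow, map_pow, hX0, hX1, digit s hs,
      ← Finset.prod_pow_eq_pow_sum, ← Finset.prod_pow_eq_pow_sum,
      ← Finset.prod_mul_distrib]
    refine prod_mem_submodule_prod _ _ _ fun j _ => ?_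
    have h1 : A ^ (s j * p ^ (j : ℕ)) = (A ^ p ^ (j : ℕ)) ^ s j := by
      rw [← pow_mul, mul_comm]
    have h2 : B ^ ((r j - s j) * p ^ (j : ℕ)) = (B ^ p ^ (j : ℕ)) ^ (r j - s j) := by
      rw [← pow_mul, mul_comm]
    rw [h1, h2, hA, hB, expch, expch]
    have := two_binom_mem (a ^ p ^ (j : ℕ)) (b ^ p ^ (j : ℕ)) (c ^ p ^ (j : ℕ))
      (d ^ p ^ (j : ℕ)) ((X 0 : MvPolynomial (Fin 2) K) ^ p ^ (j : ℕ))
      ((X 1 : MvPolynomial (Fin 2) K) ^ p ^ (j : ℕ)) (s j) (r j - s j)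
    rwa [Nat.add_sub_cancel' (hs j)] at this
  -- conclude
  intro P hP
  have hle : Submodule.map (sl2Act φ M).toLinearMap W ≤ W := by
    conv_lhs => rw [hW]
    rw [Submodule.map_span, Submodule.span_le]
    rintro _ ⟨Q, ⟨s, hs, rfl⟩, rfl⟩
    exact hWle (key s hs)
  exact hle ⟨P, hP, rfl⟩



end
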